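/- (Identifiability of the Gaussian-gated mixture of experts.) Let d, k, k' be positive integers. Let θ_1,…,θ_k with θ_i = (c_i, Γ_i, a_i, b_i, ν_i) ∈ ℝ^d × S_d^+ × ℝ^d × ℝ × ℝ_{>0} be pairwise distinct and π_1,…,π_k > 0 with Σ_i π_i = 1; likewise let θ'_1,…,θ'_{k'} be pairwise distinct with weights π'_j > 0 summing to 1. If Σ_{i=1}^{k} π_i N_d(x; c_i, Γ_i) φ(y; a_iᵀx + b_i, ν_i) = Σ_{j=1}^{k'} π'_j N_d(x; c'_j, Γ'_j) φ(y; (a'_j)ᵀx + b'_j, ν'_j) for Lebesgue-almost every (x, y) ∈ ℝ^d × ℝ, then the two mixing measures coincide: Σ_{i=1}^{k} π_i δ_{θ_i} = Σ_{j=1}^{k'} π'_j δ_{θ'_j} (in particular k = k' and the weighted atoms agree up to permutation). -/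

import Mathlib

open Matrix MeasureTheory

/-- The parameter space `ℝ^d × (d×d matrices) × ℝ^d × ℝ × ℝ` of one expert component. -/
abbrev Param (d : ℕ) : Type :=
  (Fin d → ℝ) × Matrix (Fin d) (Fin d) ℝ × (Fin d → ℝ) × ℝ × ℝ

instance {d : ℕ} : MeasurableSpace (Matrix (Fin d) (Fin d) ℝ) :=
  (inferInstance : MeasurableSpace (Fin d → Fin d → ℝ))

/-- The univariate Gaussian density with mean `b` and variance `ν`. -/
noncomputable def gauss1 (y b ν : ℝ) : ℝ :=
  (2 * Real.pi * ν) ^ (-(1 : ℝ) / 2) * Real.exp (-((y - b) ^ 2) / (2 * ν))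

/-- The `d`-variate Gaussian density with mean `c` and covariance matrix `Γ`. -/
noncomputable def gaussd (d : ℕ) (x c : Fin d → ℝ) (Γ : Matrix (Fin d) (Fin d) ℝ) : ℝ :=
  (2 * Real.pi) ^ (-(d : ℝ) / 2) * Γ.det ^ (-(1 : ℝ) / 2) *
    Real.exp (-(1 / 2) * ((x - c) ⬝ᵥ (Γ⁻¹ *ᵥ (x - c))))

/-- The joint density of one component:
`F(x, y | (c, Γ, a, b, ν)) = N_d(x; c, Γ) · φ(y; aᵀx + b, ν)`. -/
noncomputable def Fcomp {d : ℕ} (θ : Param d) (x : Fin d → ℝ) (y : ℝ) : ℝ :=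
  gaussd d x θ.1 θ.2.1 * gauss1 y (θ.2.2.1 ⬝ᵥ x + θ.2.2.2.1) θ.2.2.2.2

/-- The mixing measure `Σ_i π_i δ_{θ_i}` on the parameter space. -/
noncomputable def mixingMeasure {d m : ℕ} (π : Fin m → ℝ) (θ : Fin m → Param d) :
    Measure (Param d) :=
  ∑ i, (ENNReal.ofReal (π i)) • Measure.dirac (θ i)

/-! ### Auxiliary machinery for the identifiability proof -/

open Filter

-- Grouped linear independence of the 1-dimensional functions `t ↦ exp (α t² + β t)`:
-- if a finite linear combination vanishes identically, then the sum of the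
-- coefficients within each "level set" of `(α, β)` vanishes.
open scoped Classical in
lemma oneD {ι : Type*} (α β c : ι → ℝ) (S : Finset ι) :
    (∀ t : ℝ, ∑ s ∈ S, c s * Real.exp (α s * t ^ 2 + β s * t) = 0) →
    ∀ s₀ ∈ S, ∑ s ∈ S.filter (fun s => α s = α s₀ ∧ β s = β s₀), c s = 0 := by
  induction S using Finset.strongInduction with
  | _ S ih =>
  intro h s₀ hs₀
  obtain ⟨m, hmS, hmax⟩ := Finset.exists_max_image S (fun s => toLex (α s, β s)) ⟨s₀, hs₀⟩
  set P : ι → Prop := fun s => α s = α m ∧ β s = β m with hP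
  set T := S.filter P with hT
  set R := S.filter (fun s => ¬ P s) with hR
  -- each term with s ∈ R tends to 0
  have hterm : ∀ s ∈ R, Tendsto (fun t : ℝ => c s * Real.exp ((α s - α m) * t ^ 2 + (β s - β m) * t))
      atTop (nhds 0) := by
    intro s hs
    rw [hR, Finset.mem_filter] at hs
    have hlt : toLex (α s, β s) < toLex (α m, β m) := by
      refine lt_of_le_of_ne (hmax s hs.1) ?_
      intro hcon
      exact hs.2 ⟨congrArg (fun p => (ofLex p).1) hcon, congrArg (fun p => (ofLex p).2) hcon⟩
    have hbot : Tendsto (fun t : ℝ => (α s - α m) * t ^ 2 + (β s - β m) * t) atTop atBot := by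
      rcases Prod.Lex.toLex_lt_toLex.1 hlt with h1 | ⟨h1, h2⟩
      · have h1' : α s - α m < 0 := by linarith
        have hlin : Tendsto (fun t : ℝ => (α s - α m) * t + (β s - β m)) atTop atBot :=
          (tendsto_id.const_mul_atTop_of_neg h1').atBot_add tendsto_const_nhds
        have := tendsto_id.atTop_mul_atBot₀ hlin
        refine this.congr' ?_
        filter_upwards with t
        simp only [id]
        ring
      · have h2' : β s - β m < 0 := by linarith
        have : Tendsto (fun t : ℝ => (β s - β m) * t) atTop atBot :=
          tendsto_id.const_mul_atTop_of_neg h2'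
        refine this.congr' ?_
        filter_upwards with t
        have h1'' : α s = α m := h1
        rw [h1'']
        ring
    have := Real.tendsto_exp_atBot.comp hbot
    have := this.const_mul (c s)
    simpa using this
  -- the normalized sum is 0
  have hg : ∀ t : ℝ, ∑ s ∈ S, c s * Real.exp ((α s - α m) * t ^ 2 + (β s - β m) * t) = 0 := by
    intro t
    have : ∀ s ∈ S, c s * Real.exp ((α s - α m) * t ^ 2 + (β s - β m) * t)
        = (c s * Real.exp (α s * t ^ 2 + β s * t)) * Real.exp (-(α m * t ^ 2 + β m * t)) := by
      intro s _
      rw [mul_assoc, ← Real.exp_add]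
      ring_nf
    rw [Finset.sum_congr rfl this, ← Finset.sum_mul, h t, zero_mul]
  -- limit of the normalized sum
  have hTsum : ∑ s ∈ T, c s = 0 := by
    have hlim : Tendsto (fun t : ℝ => ∑ s ∈ S, c s * Real.exp ((α s - α m) * t ^ 2 + (β s - β m) * t))
        atTop (nhds (∑ s ∈ S, if P s then c s else 0)) := by
      refine tendsto_finset_sum _ (fun s hs => ?_)
      by_cases hPs : P s
      · have : (fun t : ℝ => c s * Real.exp ((α s - α m) * t ^ 2 + (β s - β m) * t))
            = fun _ => c s := by
          funext t
          rw [hPs.1, hPs.2]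
          simp
        rw [this, if_pos hPs]
        exact tendsto_const_nhds
      · rw [if_neg hPs]
        exact hterm s (by rw [hR, Finset.mem_filter]; exact ⟨hs, hPs⟩)
    have h0 : Tendsto (fun t : ℝ => ∑ s ∈ S, c s * Real.exp ((α s - α m) * t ^ 2 + (β s - β m) * t))
        atTop (nhds 0) := by
      have : (fun t : ℝ => ∑ s ∈ S, c s * Real.exp ((α s - α m) * t ^ 2 + (β s - β m) * t))
          = fun _ => (0:ℝ) := funext hg
      rw [this]; exact tendsto_const_nhds
    have := tendsto_nhds_unique hlim h0
    rw [← this, hT, Finset.sum_filter]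
  -- the residual sum vanishes identically
  have hB : ∀ t : ℝ, ∑ s ∈ R, c s * Real.exp (α s * t ^ 2 + β s * t) = 0 := by
    intro t
    have hsplit := Finset.sum_filter_add_sum_filter_not S P
      (f := fun s => c s * Real.exp (α s * t ^ 2 + β s * t))
    have hTpart : ∑ s ∈ T, c s * Real.exp (α s * t ^ 2 + β s * t) = 0 := by
      have : ∀ s ∈ T, c s * Real.exp (α s * t ^ 2 + β s * t)
          = c s * Real.exp (α m * t ^ 2 + β m * t) := by
        intro s hs
        rw [hT, Finset.mem_filter] at hs
        rw [hs.2.1, hs.2.2]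
      rw [Finset.sum_congr rfl this, ← Finset.sum_mul, hTsum, zero_mul]
    have := h t
    rw [← hsplit, hTpart, zero_add] at this
    exact this
  have hRS : R ⊂ S := by
    refine Finset.ssubset_iff_of_subset (Finset.filter_subset _ _) |>.2 ?_
    exact ⟨m, hmS, by simp [hR, hP]⟩
  by_cases hPs₀ : P s₀
  · have : S.filter (fun s => α s = α s₀ ∧ β s = β s₀) = T := by
      rw [hT]
      apply Finset.filter_congr
      intro s _
      constructor
      · rintro ⟨h1, h2⟩; exact ⟨h1.trans hPs₀.1, h2.trans hPs₀.2⟩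
      · rintro ⟨h1, h2⟩; exact ⟨h1.trans hPs₀.1.symm, h2.trans hPs₀.2.symm⟩
    rw [this]
    exact hTsum
  · have hs₀R : s₀ ∈ R := by rw [hR, Finset.mem_filter]; exact ⟨hs₀, hPs₀⟩
    have : S.filter (fun s => α s = α s₀ ∧ β s = β s₀)
        = R.filter (fun s => α s = α s₀ ∧ β s = β s₀) := by
      rw [hR, Finset.filter_filter]
      apply Finset.filter_congr
      intro s _
      constructor
      · rintro ⟨h1, h2⟩
        refine ⟨?_, h1, h2⟩
        intro hPs
        exact hPs₀ ⟨h1.symm.trans hPs.1, h2.symm.trans hPs.2⟩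
      · rintro ⟨_, h1, h2⟩; exact ⟨h1, h2⟩
    rw [this]
    exact ih R hRS hB s₀ hs₀R

/-- symmetric swap in the dot product -/
lemma symm_dot {d : ℕ} {A : Matrix (Fin d) (Fin d) ℝ} (hA : A.IsSymm)
    (u w : Fin d → ℝ) : u ⬝ᵥ (A *ᵥ w) = w ⬝ᵥ (A *ᵥ u) := by
  rw [Matrix.dotProduct_mulVec, ← Matrix.mulVec_transpose, hA.eq, dotProduct_comm]

lemma inv_isSymm {d : ℕ} {A : Matrix (Fin d) (Fin d) ℝ} (hA : A.IsSymm) :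
    (A⁻¹).IsSymm := by
  rw [Matrix.IsSymm, Matrix.transpose_nonsing_inv, hA.eq]

/-- quadratic part of the exponent of a component -/
noncomputable def Qf {d : ℕ} (θ : Param d) (v : (Fin d → ℝ) × ℝ) : ℝ :=
  -(1/2) * (v.1 ⬝ᵥ (θ.2.1⁻¹ *ᵥ v.1)) - (v.2 - θ.2.2.1 ⬝ᵥ v.1)^2 / (2 * θ.2.2.2.2)

/-- linear part of the exponent of a component -/
noncomputable def Lf {d : ℕ} (θ : Param d) (v : (Fin d → ℝ) × ℝ) : ℝ :=
  θ.1 ⬝ᵥ (θ.2.1⁻¹ *ᵥ v.1) + (θ.2.2.2.1 / θ.2.2.2.2) * (v.2 - θ.2.2.1 ⬝ᵥ v.1)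

/-- constant part of the exponent of a component -/
noncomputable def Cf {d : ℕ} (θ : Param d) : ℝ :=
  -(1/2) * (θ.1 ⬝ᵥ (θ.2.1⁻¹ *ᵥ θ.1)) - θ.2.2.2.1^2 / (2 * θ.2.2.2.2)

/-- positive normalizing prefactor of a component -/
noncomputable def Kf (d : ℕ) (θ : Param d) : ℝ :=
  (2 * Real.pi) ^ (-(d:ℝ)/2) * θ.2.1.det ^ (-(1:ℝ)/2) * (2 * Real.pi * θ.2.2.2.2) ^ (-(1:ℝ)/2)

lemma Kf_pos {d : ℕ} {θ : Param d} (hΓ : θ.2.1.PosDef) (hν : 0 < θ.2.2.2.2) :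
    0 < Kf d θ := by
  have h1 : (0:ℝ) < 2 * Real.pi := by positivity
  have h2 : (0:ℝ) < θ.2.1.det := hΓ.det_pos
  have h3 : (0:ℝ) < 2 * Real.pi * θ.2.2.2.2 := by positivity
  unfold Kf
  positivity

lemma Fcomp_eq {d : ℕ} (θ : Param d) (hΓs : θ.2.1.IsSymm) (hν : 0 < θ.2.2.2.2)
    (z : (Fin d → ℝ) × ℝ) :
    Fcomp θ z.1 z.2 = Kf d θ * Real.exp (Qf θ z + Lf θ z + Cf θ) := by
  obtain ⟨x, y⟩ := z
  obtain ⟨c, Γ, a, b, ν⟩ := θ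
  simp only at hΓs hν
  unfold Fcomp gaussd gauss1 Kf Qf Lf Cf
  simp only
  rw [show ∀ A B C D E : ℝ, A * B * C * (D * E) = (A * B * D) * (C * E) by intros; ring]
  rw [← Real.exp_add]
  congr 1
  have hsub : Γ⁻¹ *ᵥ (x - c) = Γ⁻¹ *ᵥ x - Γ⁻¹ *ᵥ c := Matrix.mulVec_sub Γ⁻¹ x c
  have hexp : (x - c) ⬝ᵥ (Γ⁻¹ *ᵥ (x - c))
      = x ⬝ᵥ (Γ⁻¹ *ᵥ x) - 2 * (c ⬝ᵥ (Γ⁻¹ *ᵥ x)) + c ⬝ᵥ (Γ⁻¹ *ᵥ c) := by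
    rw [hsub]
    simp only [dotProduct_sub, sub_dotProduct]
    rw [symm_dot (inv_isSymm hΓs) x c]
    ring
  rw [hexp]
  have hν' : ν ≠ 0 := ne_of_gt hν
  field_simp
  ring

lemma Qf_smul {d : ℕ} (θ : Param d) (t : ℝ) (v : (Fin d → ℝ) × ℝ) :
    Qf θ (t • v) = t^2 * Qf θ v := by
  obtain ⟨c, Γ, a, b, ν⟩ := θ
  unfold Qf
  simp only [Prod.smul_fst, Prod.smul_snd, Matrix.mulVec_smul, smul_dotProduct,
    dotProduct_smul, smul_eq_mul]
  ring

lemma Lf_smul {d : ℕ} (θ : Param d) (t : ℝ) (v : (Fin d → ℝ) × ℝ) :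
    Lf θ (t • v) = t * Lf θ v := by
  obtain ⟨c, Γ, a, b, ν⟩ := θ
  unfold Lf
  simp only [Prod.smul_fst, Prod.smul_snd, Matrix.mulVec_smul, smul_dotProduct,
    dotProduct_smul, smul_eq_mul]
  ring

/-- the polarization of `Qf` -/
noncomputable def Pf {d : ℕ} (θ : Param d) (w u : (Fin d → ℝ) × ℝ) : ℝ :=
  -(1/2) * (w.1 ⬝ᵥ (θ.2.1⁻¹ *ᵥ u.1) + u.1 ⬝ᵥ (θ.2.1⁻¹ *ᵥ w.1))
    - (w.2 - θ.2.2.1 ⬝ᵥ w.1) * (u.2 - θ.2.2.1 ⬝ᵥ u.1) / θ.2.2.2.2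

lemma Qf_expand {d : ℕ} (θ : Param d) (w u : (Fin d → ℝ) × ℝ) (s : ℝ) :
    Qf θ (w + s • u) = Qf θ w + s * Pf θ w u + s^2 * Qf θ u := by
  obtain ⟨c, Γ, a, b, ν⟩ := θ
  unfold Qf Pf
  simp only [Prod.fst_add, Prod.snd_add, Prod.smul_fst, Prod.smul_snd,
    Matrix.mulVec_add, Matrix.mulVec_smul, add_dotProduct, dotProduct_add,
    smul_dotProduct, dotProduct_smul, smul_eq_mul]
  ring

lemma Lf_expand {d : ℕ} (θ : Param d) (w u : (Fin d → ℝ) × ℝ) (s : ℝ) :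
    Lf θ (w + s • u) = Lf θ w + s * Lf θ u := by
  obtain ⟨c, Γ, a, b, ν⟩ := θ
  unfold Lf
  simp only [Prod.fst_add, Prod.snd_add, Prod.smul_fst, Prod.smul_snd,
    Matrix.mulVec_add, Matrix.mulVec_smul, add_dotProduct, dotProduct_add,
    smul_dotProduct, dotProduct_smul, smul_eq_mul]
  ring

/-- The parameters of a component are determined by the non-constant part
`(Qf, Lf)` of its exponent. -/
lemma param_inj {d : ℕ} (θ₁ θ₂ : Param d)
    (hs₁ : θ₁.2.1.IsSymm) (hp₁ : θ₁.2.1.PosDef)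
    (hs₂ : θ₂.2.1.IsSymm) (hp₂ : θ₂.2.1.PosDef)
    (hν₁ : 0 < θ₁.2.2.2.2) (hν₂ : 0 < θ₂.2.2.2.2)
    (hQ : ∀ v, Qf θ₁ v = Qf θ₂ v) (hL : ∀ v, Lf θ₁ v = Lf θ₂ v) : θ₁ = θ₂ := by
  obtain ⟨c₁, Γ₁, a₁, b₁, ν₁⟩ := θ₁
  obtain ⟨c₂, Γ₂, a₂, b₂, ν₂⟩ := θ₂
  simp only at hs₁ hp₁ hs₂ hp₂ hν₁ hν₂ hQ hL ⊢
  have hdet₁ : IsUnit Γ₁.det := isUnit_iff_ne_zero.2 hp₁.det_pos.ne'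
  have hdet₂ : IsUnit Γ₂.det := isUnit_iff_ne_zero.2 hp₂.det_pos.ne'
  -- ν₁ = ν₂
  have hν : ν₁ = ν₂ := by
    have := hQ (0, 1)
    unfold Qf at this
    simp only [Matrix.mulVec_zero, dotProduct_zero] at this
    have h2 : (1:ℝ) / (2 * ν₁) = 1 / (2 * ν₂) := by
      field_simp at this ⊢
      linarith
    field_simp at h2
    linarith
  subst hν
  -- a₁ = a₂
  have ha : a₁ = a₂ := by
    have key : ∀ u : Fin d → ℝ, a₁ ⬝ᵥ u = a₂ ⬝ᵥ u := by
      intro u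
      have h0 := hQ (u, 0)
      have h1 := hQ (u, 1)
      unfold Qf at h0 h1
      simp only at h0 h1
      have hν' : ν₁ ≠ 0 := ne_of_gt hν₁
      field_simp at h0 h1
      nlinarith [h0, h1]
    funext i
    have := key (Pi.single i 1)
    rwa [dotProduct_single, dotProduct_single, mul_one, mul_one] at this
  subst ha
  -- Γ₁ = Γ₂
  have hXeq : ∀ u : Fin d → ℝ, u ⬝ᵥ (Γ₁⁻¹ *ᵥ u) = u ⬝ᵥ (Γ₂⁻¹ *ᵥ u) := by
    intro u
    have h0 := hQ (u, 0)
    unfold Qf at h0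
    simp only at h0
    linarith
  have hΓinv : Γ₁⁻¹ = Γ₂⁻¹ := by
    have hentry : ∀ i j, (Γ₁⁻¹) i j + (Γ₁⁻¹) j i = (Γ₂⁻¹) i j + (Γ₂⁻¹) j i := by
      intro i j
      have hii := hXeq (Pi.single i 1)
      have hjj := hXeq (Pi.single j 1)
      have hij := hXeq (Pi.single i 1 + Pi.single j 1)
      simp only [Matrix.mulVec_add, dotProduct_add, add_dotProduct,
        Matrix.mulVec_single_one, single_dotProduct, Matrix.col_apply, mul_one, one_mul] at hii hjj hij
      linarith
    ext i j
    have h1 := hentry i j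
    have e1 : (Γ₁⁻¹) j i = (Γ₁⁻¹) i j := by
      have := (inv_isSymm hs₁).apply i j
      simpa using this
    have e2 : (Γ₂⁻¹) j i = (Γ₂⁻¹) i j := by
      have := (inv_isSymm hs₂).apply i j
      simpa using this
    rw [e1, e2] at h1
    linarith
  have hΓ : Γ₁ = Γ₂ := by
    have := congrArg (·⁻¹) hΓinv
    simpa [Matrix.nonsing_inv_nonsing_inv _ hdet₁, Matrix.nonsing_inv_nonsing_inv _ hdet₂]
      using this
  subst hΓ
  -- b₁ = b₂
  have hb : b₁ = b₂ := by
    have := hL (0, 1)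
    unfold Lf at this
    simp only [Matrix.mulVec_zero, dotProduct_zero] at this
    have hν' : ν₁ ≠ 0 := ne_of_gt hν₁
    field_simp at this
    linarith
  subst hb
  -- c₁ = c₂
  have hc : c₁ = c₂ := by
    have key : ∀ w : Fin d → ℝ, c₁ ⬝ᵥ w = c₂ ⬝ᵥ w := by
      intro w
      have := hL (Γ₁ *ᵥ w, 0)
      unfold Lf at this
      simp only [Matrix.mulVec_mulVec, Matrix.nonsing_inv_mul _ hdet₁, Matrix.one_mulVec] at this
      linarith
    funext i
    have := key (Pi.single i 1)
    rwa [dotProduct_single, dotProduct_single, mul_one, mul_one] at this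
  subst hc
  rfl

lemma Qf_cont {d : ℕ} (θ : Param d) : Continuous (Qf θ) := by
  unfold Qf
  simp only [dotProduct, Matrix.mulVec]
  fun_prop

lemma Lf_cont {d : ℕ} (θ : Param d) : Continuous (Lf θ) := by
  unfold Lf
  simp only [dotProduct, Matrix.mulVec]
  fun_prop

section DenseLemmas
variable {E : Type*} [NormedAddCommGroup E] [NormedSpace ℝ E]

lemma eventually_zero_coeffs {D : E → ℝ} {P : E → E → ℝ} {Q : E → ℝ}
    (hexp : ∀ w u s, D (w + s • u) = D w + s * P w u + s ^ 2 * Q u)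
    {x : E} {ε : ℝ} (hε : 0 < ε) (hz : ∀ v ∈ Metric.ball x ε, D v = 0) (u : E) :
    P x u = 0 ∧ Q u = 0 := by
  have hx : D x = 0 := hz x (Metric.mem_ball_self hε)
  set s₀ : ℝ := ε / (2 * (‖u‖ + 1)) with hs₀
  have hu1 : (0:ℝ) < ‖u‖ + 1 := by positivity
  have hs₀pos : 0 < s₀ := by positivity
  have hmem : ∀ s : ℝ, |s| ≤ s₀ → x + s • u ∈ Metric.ball x ε := by
    intro s hs
    rw [Metric.mem_ball, dist_eq_norm]
    have : ‖x + s • u - x‖ = |s| * ‖u‖ := by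
      rw [add_sub_cancel_left, norm_smul, Real.norm_eq_abs]
    rw [this]
    have h1 : |s| * ‖u‖ ≤ s₀ * ‖u‖ := by
      apply mul_le_mul_of_nonneg_right hs (norm_nonneg u)
    have h2 : s₀ * ‖u‖ < ε := by
      rw [hs₀]
      rw [div_mul_eq_mul_div, div_lt_iff₀ (by positivity)]
      nlinarith [norm_nonneg u]
    linarith
  have hp := hz _ (hmem s₀ (le_of_eq (abs_of_pos hs₀pos)))
  have hm := hz _ (hmem (-s₀) (le_of_eq (abs_neg s₀ ▸ abs_of_pos hs₀pos)))
  rw [hexp, hx] at hp hm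
  constructor
  · have : 2 * (s₀ * P x u) = 0 := by nlinarith [hp, hm]
    have h2 : s₀ * P x u = 0 := by linarith
    exact (mul_eq_zero.1 h2).resolve_left hs₀pos.ne'
  · have : 2 * (s₀ ^ 2 * Q u) = 0 := by nlinarith [hp, hm]
    have h2 : s₀ ^ 2 * Q u = 0 := by linarith
    exact (mul_eq_zero.1 h2).resolve_left (by positivity)

/-- The non-vanishing set of a nonzero "quadratic" function is dense. -/
lemma dense_ne_quad {D : E → ℝ} {P : E → E → ℝ}
    (hexp : ∀ w u s, D (w + s • u) = D w + s * P w u + s ^ 2 * D u)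
    (hne : ∃ v, D v ≠ 0) : Dense {v : E | D v ≠ 0} := by
  rw [Metric.dense_iff]
  intro x ε hε
  by_contra hcon
  rw [Set.not_nonempty_iff_eq_empty] at hcon
  have hz : ∀ v ∈ Metric.ball x ε, D v = 0 := by
    intro v hv
    by_contra hDv
    exact Set.eq_empty_iff_forall_notMem.1 hcon v ⟨hv, hDv⟩
  obtain ⟨v₀, hv₀⟩ := hne
  exact hv₀ (eventually_zero_coeffs hexp hε hz v₀).2

/-- The non-vanishing set of a nonzero "linear" function is dense. -/
lemma dense_ne_lin {e : E → ℝ}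
    (hexp : ∀ w u s, e (w + s • u) = e w + s * e u)
    (hne : ∃ v, e v ≠ 0) : Dense {v : E | e v ≠ 0} := by
  have hexp' : ∀ w u s, e (w + s • u) = e w + s * e u + s ^ 2 * (0 : ℝ) := by
    intro w u s; rw [hexp]; ring
  rw [Metric.dense_iff]
  intro x ε hε
  by_contra hcon
  rw [Set.not_nonempty_iff_eq_empty] at hcon
  have hz : ∀ v ∈ Metric.ball x ε, e v = 0 := by
    intro v hv
    by_contra hDv
    exact Set.eq_empty_iff_forall_notMem.1 hcon v ⟨hv, hDv⟩
  obtain ⟨v₀, hv₀⟩ := hne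
  have h1 := (eventually_zero_coeffs (Q := fun _ => (0:ℝ)) (P := fun _ u => e u) hexp' hε hz v₀).1
  exact hv₀ h1

end DenseLemmas

/-- Finitely many dense open conditions can be met simultaneously. -/
lemma dense_open_inter {α E : Type*} [TopologicalSpace E] (S : Finset α) (Pred : α → E → Prop)
    (h : ∀ p ∈ S, ∃ G : Set E, IsOpen G ∧ Dense G ∧ ∀ v ∈ G, Pred p v) :
    ∃ G : Set E, IsOpen G ∧ Dense G ∧ ∀ v ∈ G, ∀ p ∈ S, Pred p v := by
  classical
  induction S using Finset.induction_on with
  | empty => exact ⟨Set.univ, isOpen_univ, dense_univ, by simp⟩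
  | insert a s hnm ih =>
    obtain ⟨Ga, hGao, hGad, hGa⟩ := h a (Finset.mem_insert_self a s)
    obtain ⟨G, hGo, hGd, hG⟩ := ih (fun p hp => h p (Finset.mem_insert_of_mem hp))
    refine ⟨Ga ∩ G, hGao.inter hGo, hGad.inter_of_isOpen_left hGd hGao, ?_⟩
    intro v hv p hp
    rcases Finset.mem_insert.1 hp with rfl | hp'
    · exact hGa v hv.1
    · exact hG v hv.2 p hp'

/-- There is a direction `v` separating the exponents of all the
(finitely many) pairs of distinct valid parameters. -/
lemma exists_good {d : ℕ} (Θs : Finset (Param d × Param d))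
    (hvalid : ∀ p ∈ Θs,
      (p.1.2.1.IsSymm ∧ p.1.2.1.PosDef ∧ 0 < p.1.2.2.2.2)
      ∧ (p.2.2.1.IsSymm ∧ p.2.2.1.PosDef ∧ 0 < p.2.2.2.2.2) ∧ p.1 ≠ p.2) :
    ∃ v : (Fin d → ℝ) × ℝ, ∀ p ∈ Θs,
      ¬(Qf p.1 v = Qf p.2 v ∧ Lf p.1 v = Lf p.2 v) := by
  have key : ∀ p ∈ Θs, ∃ G : Set ((Fin d → ℝ) × ℝ), IsOpen G ∧ Dense G ∧
      ∀ v ∈ G, ¬(Qf p.1 v = Qf p.2 v ∧ Lf p.1 v = Lf p.2 v) := by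
    intro p hp
    obtain ⟨⟨hsy1, hpd1, hν1⟩, ⟨hsy2, hpd2, hν2⟩, hne⟩ := hvalid p hp
    by_cases hD : ∃ v, Qf p.1 v - Qf p.2 v ≠ 0
    · refine ⟨{v | Qf p.1 v - Qf p.2 v ≠ 0}, ?_, ?_, ?_⟩
      · exact isOpen_ne_fun ((Qf_cont p.1).sub (Qf_cont p.2)) continuous_const
      · refine dense_ne_quad (P := fun w u => Pf p.1 w u - Pf p.2 w u) ?_ hD
        intro w u s
        rw [Qf_expand, Qf_expand]
        ring
      · rintro v hv ⟨h1, _⟩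
        exact hv (by rw [h1, sub_self])
    · push_neg at hD
      have hQeq : ∀ v, Qf p.1 v = Qf p.2 v := fun v => by
        have := hD v; exact sub_eq_zero.1 this
      have hLne : ∃ v, Lf p.1 v - Lf p.2 v ≠ 0 := by
        by_contra hL
        push_neg at hL
        exact hne (param_inj p.1 p.2 hsy1 hpd1 hsy2 hpd2 hν1 hν2 hQeq
          (fun v => sub_eq_zero.1 (hL v)))
      refine ⟨{v | Lf p.1 v - Lf p.2 v ≠ 0}, ?_, ?_, ?_⟩
      · exact isOpen_ne_fun ((Lf_cont p.1).sub (Lf_cont p.2)) continuous_const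
      · refine dense_ne_lin ?_ hLne
        intro w u s
        rw [Lf_expand, Lf_expand]
        ring
      · rintro v hv ⟨_, h2⟩
        exact hv (by rw [h2, sub_self])
  obtain ⟨G, _, hGd, hG⟩ := dense_open_inter Θs _ key
  obtain ⟨v, hv⟩ := hGd.nonempty
  exact ⟨v, fun p hp => hG v hv p hp⟩

/-- **Identifiability of the Gaussian-gated mixture of experts.** If two finite mixtures
of products `N_d(x; c_i, Γ_i) φ(y; a_iᵀx + b_i, ν_i)` (with pairwise distinct components,
symmetric positive-definite `Γ_i`, positive `ν_i`, and positive weights summing to one)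
agree for Lebesgue-almost every `(x, y) ∈ ℝ^d × ℝ`, then the corresponding mixing
measures coincide. -/
theorem gmoe_identifiability (d k k' : ℕ) (hd : 0 < d) (hk : 0 < k) (hk' : 0 < k')
    (π : Fin k → ℝ) (θ : Fin k → Param d)
    (π' : Fin k' → ℝ) (θ' : Fin k' → Param d)
    (hθdist : Function.Injective θ) (hθ'dist : Function.Injective θ')
    (hπ : ∀ i, 0 < π i) (hπ' : ∀ j, 0 < π' j)
    (hπsum : ∑ i, π i = 1) (hπ'sum : ∑ j, π' j = 1)
    (hΓ : ∀ i, ((θ i).2.1).IsSymm ∧ ((θ i).2.1).PosDef)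
    (hΓ' : ∀ j, ((θ' j).2.1).IsSymm ∧ ((θ' j).2.1).PosDef)
    (hν : ∀ i, 0 < (θ i).2.2.2.2) (hν' : ∀ j, 0 < (θ' j).2.2.2.2)
    (heq : ∀ᵐ z : (Fin d → ℝ) × ℝ,
      ∑ i, π i * Fcomp (θ i) z.1 z.2 = ∑ j, π' j * Fcomp (θ' j) z.1 z.2) :
    mixingMeasure π θ = mixingMeasure π' θ' := by
  classical
  set Θ : Fin k ⊕ Fin k' → Param d := Sum.elim θ θ' with hΘdef
  have hval : ∀ s : Fin k ⊕ Fin k',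
      ((Θ s).2.1.IsSymm ∧ (Θ s).2.1.PosDef) ∧ 0 < (Θ s).2.2.2.2 := by
    intro s
    cases s with
    | inl i => exact ⟨hΓ i, hν i⟩
    | inr j => exact ⟨hΓ' j, hν' j⟩
  -- Step 1: a.e. equality upgrades to everywhere equality by continuity.
  have hcont : ∀ (m : ℕ) (ρ : Fin m → ℝ) (ϑ : Fin m → Param d),
      (∀ i, (ϑ i).2.1.IsSymm) → (∀ i, 0 < (ϑ i).2.2.2.2) →
      Continuous (fun z : (Fin d → ℝ) × ℝ => ∑ i, ρ i * Fcomp (ϑ i) z.1 z.2) := by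
    intro m ρ ϑ hsym hpos
    have hfe : (fun z : (Fin d → ℝ) × ℝ => ∑ i, ρ i * Fcomp (ϑ i) z.1 z.2)
        = fun z => ∑ i, ρ i * (Kf d (ϑ i) * Real.exp (Qf (ϑ i) z + Lf (ϑ i) z + Cf (ϑ i))) := by
      funext z
      exact Finset.sum_congr rfl fun i _ => by rw [Fcomp_eq (ϑ i) (hsym i) (hpos i) z]
    rw [hfe]
    refine continuous_finset_sum _ fun i _ => ?_
    exact continuous_const.mul (continuous_const.mul (Real.continuous_exp.comp
      (((Qf_cont (ϑ i)).add (Lf_cont (ϑ i))).add continuous_const)))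
  have hpoint : ∀ z : (Fin d → ℝ) × ℝ,
      ∑ i, π i * Fcomp (θ i) z.1 z.2 = ∑ j, π' j * Fcomp (θ' j) z.1 z.2 := by
    have h1 := hcont k π θ (fun i => (hΓ i).1) hν
    have h2 := hcont k' π' θ' (fun j => (hΓ' j).1) hν'
    have := (Continuous.ae_eq_iff_eq volume h1 h2).1 heq
    exact fun z => congrFun this z
  -- Step 2: choose a direction separating all pairs of distinct components.
  set Θs : Finset (Param d × Param d) :=
    (Finset.univ.filter
      (fun q : (Fin k ⊕ Fin k') × (Fin k ⊕ Fin k') => Θ q.1 ≠ Θ q.2)).image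
      (fun q => (Θ q.1, Θ q.2)) with hΘs
  have hvalid : ∀ p ∈ Θs,
      (p.1.2.1.IsSymm ∧ p.1.2.1.PosDef ∧ 0 < p.1.2.2.2.2)
      ∧ (p.2.2.1.IsSymm ∧ p.2.2.1.PosDef ∧ 0 < p.2.2.2.2.2) ∧ p.1 ≠ p.2 := by
    intro p hp
    rw [hΘs, Finset.mem_image] at hp
    obtain ⟨q, hq, rfl⟩ := hp
    rw [Finset.mem_filter] at hq
    exact ⟨⟨(hval q.1).1.1, (hval q.1).1.2, (hval q.1).2⟩,
      ⟨(hval q.2).1.1, (hval q.2).1.2, (hval q.2).2⟩, hq.2⟩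
  obtain ⟨v, hv⟩ := exists_good Θs hvalid
  have hgood : ∀ s s' : Fin k ⊕ Fin k', Θ s ≠ Θ s' →
      ¬(Qf (Θ s) v = Qf (Θ s') v ∧ Lf (Θ s) v = Lf (Θ s') v) := by
    intro s s' hne
    exact hv (Θ s, Θ s') (Finset.mem_image.2
      ⟨(s, s'), Finset.mem_filter.2 ⟨Finset.mem_univ _, hne⟩, rfl⟩)
  -- Step 3: restrict to the line `t • v` and get the 1D exponential identity.
  set W : Param d → ℝ := fun ϑ => Kf d ϑ * Real.exp (Cf ϑ) with hWdef
  have hWpos : ∀ s : Fin k ⊕ Fin k', 0 < W (Θ s) :=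
    fun s => mul_pos (Kf_pos (hval s).1.2 (hval s).2) (Real.exp_pos _)
  set μ : Fin k ⊕ Fin k' → ℝ :=
    Sum.elim (fun i => π i * W (θ i)) (fun j => -(π' j * W (θ' j))) with hμdef
  have hterm : ∀ (ϑ : Param d), ϑ.2.1.IsSymm → 0 < ϑ.2.2.2.2 → ∀ (ρ t : ℝ),
      ρ * W ϑ * Real.exp (Qf ϑ v * t ^ 2 + Lf ϑ v * t) = ρ * Fcomp ϑ (t • v).1 (t • v).2 := by
    intro ϑ hϑs hϑν ρ t
    rw [Fcomp_eq ϑ hϑs hϑν (t • v), Qf_smul, Lf_smul, hWdef]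
    have hre : Real.exp (t ^ 2 * Qf ϑ v + t * Lf ϑ v + Cf ϑ)
        = Real.exp (Cf ϑ) * Real.exp (Qf ϑ v * t ^ 2 + Lf ϑ v * t) := by
      rw [← Real.exp_add]
      congr 1
      ring
    rw [hre]
    ring
  have hline : ∀ t : ℝ,
      ∑ s : Fin k ⊕ Fin k', μ s * Real.exp (Qf (Θ s) v * t ^ 2 + Lf (Θ s) v * t) = 0 := by
    intro t
    rw [Fintype.sum_sum_type]
    have hL1 : ∀ i : Fin k,
        μ (Sum.inl i) * Real.exp (Qf (Θ (Sum.inl i)) v * t ^ 2 + Lf (Θ (Sum.inl i)) v * t)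
        = π i * Fcomp (θ i) (t • v).1 (t • v).2 := by
      intro i
      have : μ (Sum.inl i) = π i * W (θ i) := by rw [hμdef]; rfl
      rw [this]
      have hh : Θ (Sum.inl i) = θ i := rfl
      rw [hh]
      exact hterm (θ i) (hΓ i).1 (hν i) (π i) t
    have hL2 : ∀ j : Fin k',
        μ (Sum.inr j) * Real.exp (Qf (Θ (Sum.inr j)) v * t ^ 2 + Lf (Θ (Sum.inr j)) v * t)
        = -(π' j * Fcomp (θ' j) (t • v).1 (t • v).2) := by
      intro j
      have : μ (Sum.inr j) = -(π' j * W (θ' j)) := by rw [hμdef]; rfl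
      rw [this]
      have hh : Θ (Sum.inr j) = θ' j := rfl
      rw [hh, neg_mul]
      rw [hterm (θ' j) (hΓ' j).1 (hν' j) (π' j) t]
    rw [Finset.sum_congr rfl (fun i _ => hL1 i), Finset.sum_congr rfl (fun j _ => hL2 j)]
    rw [Finset.sum_neg_distrib]
    rw [hpoint (t • v)]
    ring
  -- Step 4: apply the 1D linear independence result.
  have hgrp := oneD (fun s => Qf (Θ s) v) (fun s => Lf (Θ s) v) μ Finset.univ hline
  have hkey0 : ∀ s₀ : Fin k ⊕ Fin k',
      ∑ s ∈ Finset.univ.filter (fun s => Θ s = Θ s₀), μ s = 0 := by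
    intro s₀
    have h := hgrp s₀ (Finset.mem_univ _)
    have hfeq : Finset.univ.filter
        (fun s => Qf (Θ s) v = Qf (Θ s₀) v ∧ Lf (Θ s) v = Lf (Θ s₀) v)
        = Finset.univ.filter (fun s => Θ s = Θ s₀) := by
      apply Finset.filter_congr
      intro s _
      constructor
      · intro hqs
        by_contra hne
        exact hgood s s₀ hne hqs
      · intro hq
        rw [hq]
        exact ⟨rfl, rfl⟩
    rw [← hfeq]
    convert h using 2
  -- Step 5: extract the weight identities.
  set A : Param d → ℝ := fun ϑ => ∑ i, if θ i = ϑ then π i else 0 with hAdef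
  set B : Param d → ℝ := fun ϑ => ∑ j, if θ' j = ϑ then π' j else 0 with hBdef
  have hAB : ∀ s₀ : Fin k ⊕ Fin k', A (Θ s₀) = B (Θ s₀) := by
    intro s₀
    have h := hkey0 s₀
    rw [Finset.sum_filter, Fintype.sum_sum_type] at h
    have e1 : ∀ i : Fin k, (if Θ (Sum.inl i) = Θ s₀ then μ (Sum.inl i) else 0)
        = (if θ i = Θ s₀ then π i else 0) * W (Θ s₀) := by
      intro i
      have hh : Θ (Sum.inl i) = θ i := rfl
      have hμi : μ (Sum.inl i) = π i * W (θ i) := by rw [hμdef]; rfl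
      rw [hh, hμi]
      split_ifs with hc
      · rw [hc]
      · rw [zero_mul]
    have e2 : ∀ j : Fin k', (if Θ (Sum.inr j) = Θ s₀ then μ (Sum.inr j) else 0)
        = -((if θ' j = Θ s₀ then π' j else 0) * W (Θ s₀)) := by
      intro j
      have hh : Θ (Sum.inr j) = θ' j := rfl
      have hμj : μ (Sum.inr j) = -(π' j * W (θ' j)) := by rw [hμdef]; rfl
      rw [hh, hμj]
      split_ifs with hc
      · rw [hc]
      · rw [zero_mul, neg_zero]
    rw [Finset.sum_congr rfl (fun i _ => e1 i), Finset.sum_congr rfl (fun j _ => e2 j)] at h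
    rw [Finset.sum_neg_distrib, ← Finset.sum_mul, ← Finset.sum_mul] at h
    have hW0 : (0:ℝ) < W (Θ s₀) := hWpos s₀
    have : (A (Θ s₀) - B (Θ s₀)) * W (Θ s₀) = 0 := by
      rw [hAdef, hBdef]
      simp only
      linarith [h]
    have hdiff := (mul_eq_zero.1 this).resolve_right hW0.ne'
    linarith [hdiff]
  have hA_self : ∀ i₀ : Fin k, A (θ i₀) = π i₀ := by
    intro i₀
    rw [hAdef]
    simp only
    have : ∀ i : Fin k, (if θ i = θ i₀ then π i else 0) = if i = i₀ then π i else 0 := by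
      intro i
      congr 1
      simp only [eq_iff_iff]
      exact ⟨fun h => hθdist h, fun h => congrArg θ h⟩
    rw [Finset.sum_congr rfl (fun i _ => this i), Finset.sum_ite_eq' Finset.univ i₀ π]
    simp
  have hB_self : ∀ j₀ : Fin k', B (θ' j₀) = π' j₀ := by
    intro j₀
    rw [hBdef]
    simp only
    have : ∀ j : Fin k', (if θ' j = θ' j₀ then π' j else 0) = if j = j₀ then π' j else 0 := by
      intro j
      congr 1
      simp only [eq_iff_iff]
      exact ⟨fun h => hθ'dist h, fun h => congrArg θ' h⟩
    rw [Finset.sum_congr rfl (fun j _ => this j), Finset.sum_ite_eq' Finset.univ j₀ π']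
    simp
  have hkeyA : ∀ i₀ : Fin k, π i₀ = B (θ i₀) := by
    intro i₀
    have := hAB (Sum.inl i₀)
    rwa [show Θ (Sum.inl i₀) = θ i₀ from rfl, hA_self i₀] at this
  have hkeyB : ∀ j₀ : Fin k', A (θ' j₀) = π' j₀ := by
    intro j₀
    have := hAB (Sum.inr j₀)
    rwa [show Θ (Sum.inr j₀) = θ' j₀ from rfl, hB_self j₀] at this
  -- Step 6: build the matching bijection.
  have hexists : ∀ i, ∃ j, θ' j = θ i := by
    intro i
    by_contra hno
    push_neg at hno
    have hB0 : B (θ i) = 0 := by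
      rw [hBdef]
      exact Finset.sum_eq_zero (fun j _ => if_neg (hno j))
    have := hkeyA i
    rw [hB0] at this
    exact (hπ i).ne' this
  choose σ hσ using hexists
  have hσπ : ∀ i, π' (σ i) = π i := by
    intro i
    have hBi : B (θ i) = π' (σ i) := by
      have hiff : ∀ j, (θ' j = θ i) ↔ (j = σ i) :=
        fun j => ⟨fun h => hθ'dist (h.trans (hσ i).symm), fun h => h ▸ hσ i⟩
      rw [hBdef]
      simp only
      have : ∀ j : Fin k', (if θ' j = θ i then π' j else 0) = if j = σ i then π' j else 0 := by
        intro j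
        congr 1
        simp only [eq_iff_iff]
        exact hiff j
      rw [Finset.sum_congr rfl (fun j _ => this j), Finset.sum_ite_eq' Finset.univ (σ i) π']
      simp
    rw [← hkeyA i] at hBi
    exact hBi.symm ▸ rfl
  have hσinj : Function.Injective σ := by
    intro i i' h
    apply hθdist
    rw [← hσ i, ← hσ i', h]
  have hσsurj : Function.Surjective σ := by
    intro j₀
    have hex : ∃ i, θ i = θ' j₀ := by
      by_contra hno
      push_neg at hno
      have hA0 : A (θ' j₀) = 0 := by
        rw [hAdef]
        exact Finset.sum_eq_zero (fun i _ => if_neg (hno i))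
      have := hkeyB j₀
      rw [hA0] at this
      exact (hπ' j₀).ne' this.symm
    obtain ⟨i, hi⟩ := hex
    refine ⟨i, hθ'dist ?_⟩
    rw [hσ i, hi]
  -- Step 7: conclude equality of the mixing measures.
  unfold mixingMeasure
  refine Fintype.sum_bijective σ ⟨hσinj, hσsurj⟩ _ _ ?_
  intro i
  rw [hσ i, hσπ i]
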